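/- arXiv:2202.08050 — 4 statements merged into one kernel-verified Lean document; each statement's English description precedes it below -/
import Mathlib

section
/- Let k be a perfect field of characteristic p, (Q,Φ,Ψ) a Hasse–Witt triple, R_1 = Ker(Φ), and R_0 ⊆ Q a complement of R_1. Define M = Q ⊕ Q^∨ with the alternating form b((q,λ),(q',λ')) = λ'(q) − λ(q'), and define F(r_0 + r_1, λ) = (Φ(r_0), Ψ(r_1)) and V(q,λ) = (0, Φ^∨(λ mod Im(Φ)^⊥), −Ψ^∨(q mod Im(Φ))) ∈ Q ⊕ R_0^∨ ⊕ R_1^∨. Then Im(F) = Ker(V) and Ker(F) = Im(V), so (M,F,V,b) is a polarized Dieudonné module. -/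
/-- From a Hasse–Witt triple `(Q,Φ,Ψ)` over a perfect field `k` of characteristic `p`,
with `R₁ = ker Φ` and a complement `R₀`, the maps `F` and `V` defined on
`M = Q ⊕ Q^∨` by `F(r₀+r₁,λ) = (Φ r₀, Ψ r₁)` and
`V(q,λ) = (0, Φ^∨(λ mod im(Φ)^⊥), −Ψ^∨(q mod im Φ))` (the latter expressed by its
values on `R₀` and `R₁`), together with the form `b((q,λ),(q',λ')) = λ'(q) − λ(q')`,
satisfy `im F = ker V` and `ker F = im V`, so `(M,F,V,b)` is a polarized Dieudonné
module. -/
theorem stmt8 (p : ℕ) [Fact p.Prime] (k : Type*) [Field k] [CharP k p]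
    (σ : k ≃+* k) (hσ : ∀ x : k, σ x = x ^ p)
    (Q : Type*) [AddCommGroup Q] [Module k Q] [FiniteDimensional k Q]
    (Φ : Q →ₛₗ[(σ : k →+* k)] Q)
    (Ψ : ↥(LinearMap.ker Φ) →ₛₗ[(σ : k →+* k)] Module.Dual k Q)
    (hΨinj : Function.Injective Ψ)
    (hΨrange : LinearMap.range Ψ = (LinearMap.range Φ).dualAnnihilator)
    (R₀ : Submodule k Q) (hR₀ : IsCompl R₀ (LinearMap.ker Φ))
    (b : (Q × Module.Dual k Q) →ₗ[k] (Q × Module.Dual k Q) →ₗ[k] k)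
    (hb : ∀ x y : Q × Module.Dual k Q, b x y = y.2 x.1 - x.2 y.1)
    (F : (Q × Module.Dual k Q) →ₛₗ[(σ : k →+* k)] (Q × Module.Dual k Q))
    (hF : ∀ (r₀ : ↥R₀) (r₁ : ↥(LinearMap.ker Φ)) (lam : Module.Dual k Q),
      F ((r₀ : Q) + (r₁ : Q), lam) = (Φ (r₀ : Q), Ψ r₁))
    (V : (Q × Module.Dual k Q) →ₛₗ[(σ.symm : k →+* k)] (Q × Module.Dual k Q))
    (hV1 : ∀ x : Q × Module.Dual k Q, (V x).1 = 0)
    (hV2 : ∀ (x : Q × Module.Dual k Q) (r₀ : ↥R₀),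
      (V x).2 (r₀ : Q) = σ.symm (x.2 (Φ (r₀ : Q))))
    (hV3 : ∀ (x : Q × Module.Dual k Q) (r₁ : ↥(LinearMap.ker Φ)),
      (V x).2 (r₁ : Q) = σ.symm (-(Ψ r₁) x.1)) :
    LinearMap.range F = LinearMap.ker V ∧
    LinearMap.ker F = LinearMap.range V ∧
    (∀ x, b x x = 0) ∧
    (∀ x, (∀ y, b x y = 0) → x = 0) ∧
    (∀ x y, b (F x) y = (b x (V y)) ^ p) := by
  haveI i1 : RingHomInvPair (σ : k →+* k) (σ.symm : k →+* k) := RingHomInvPair.of_ringEquiv σ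
  haveI i2 : RingHomInvPair (σ.symm : k →+* k) (σ : k →+* k) := RingHomInvPair.of_ringEquiv σ.symm
  -- decomposition
  have hdec : ∀ x : Q, ∃ (r₀ : R₀) (r₁ : LinearMap.ker Φ), x = (r₀ : Q) + (r₁ : Q) := by
    intro x
    have hx : x ∈ R₀ ⊔ LinearMap.ker Φ := by rw [hR₀.sup_eq_top]; trivial
    rcases Submodule.mem_sup.mp hx with ⟨u, hu, v, hv, h⟩
    exact ⟨⟨u, hu⟩, ⟨v, hv⟩, h.symm⟩
  have hsymm0 : ∀ z : k, σ.symm z = 0 → z = 0 := fun z h => by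
    have := congrArg σ h; simpa using this
  have hpow : ∀ z : k, σ.symm z ^ p = z := fun z => by
    rw [← hσ]; exact σ.apply_symm_apply z
  have hann : ∀ (r₁ : LinearMap.ker Φ) (w : Q), w ∈ LinearMap.range Φ → Ψ r₁ w = 0 := by
    intro r₁ w hw
    have h1 : Ψ r₁ ∈ LinearMap.range Ψ := ⟨r₁, rfl⟩
    rw [hΨrange, Submodule.mem_dualAnnihilator] at h1
    exact h1 w hw
  have hfun_ext : ∀ f g : Module.Dual k Q,
      (∀ r₀ : R₀, f (r₀ : Q) = g (r₀ : Q)) →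
      (∀ r₁ : LinearMap.ker Φ, f (r₁ : Q) = g (r₁ : Q)) → f = g := by
    intro f g h0 h1
    ext x
    rcases hdec x with ⟨r₀, r₁, rfl⟩
    rw [map_add, map_add, h0, h1]
  have hFx : ∀ x : Q × Module.Dual k Q, ∀ (r₀ : R₀) (r₁ : LinearMap.ker Φ),
      x.1 = (r₀ : Q) + (r₁ : Q) → F x = (Φ (r₀ : Q), Ψ r₁) := by
    intro x r₀ r₁ h
    have : x = ((r₀ : Q) + (r₁ : Q), x.2) := by rw [← h]
    rw [this, hF]
  -- the key surjectivity construction: everything of the form (0, lam) is in range V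
  have hsurj : ∀ lam : Module.Dual k Q, ((0 : Q), lam) ∈ LinearMap.range V := by
    intro lam
    -- build μ
    have hinj0 : Function.Injective (Φ.domRestrict R₀) := by
      intro u v huv
      have h2 : ((u : Q) - (v : Q)) ∈ LinearMap.ker Φ := by
        simp only [LinearMap.mem_ker, map_sub]
        simpa [LinearMap.domRestrict_apply, sub_eq_zero] using huv
      have h3 : ((u : Q) - (v : Q)) ∈ R₀ := sub_mem u.2 v.2
      have h4 : ((u : Q) - (v : Q)) ∈ R₀ ⊓ LinearMap.ker Φ := ⟨h3, h2⟩
      rw [hR₀.inf_eq_bot] at h4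
      exact Subtype.ext (by simpa [sub_eq_zero] using h4)
    let e := LinearEquiv.ofInjective (Φ.domRestrict R₀) hinj0
    let f : ↥(LinearMap.range (Φ.domRestrict R₀)) →ₗ[k] k :=
      { toFun := fun w => σ (lam (e.symm w))
        map_add' := fun u v => by simp only [map_add, Submodule.coe_add]
        map_smul' := fun c w => by
          simp only [map_smulₛₗ, SetLike.val_smul, map_smul, smul_eq_mul, map_mul,
            RingEquiv.apply_symm_apply, RingHom.id_apply, RingHom.coe_coe] }
    obtain ⟨μ, hμ⟩ := LinearMap.exists_extend f
    -- build q
    let eΨ := LinearEquiv.ofInjective Ψ hΨinj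
    let g : ↥(LinearMap.range Ψ) →ₗ[k] k :=
      { toFun := fun ν => -σ (lam (eΨ.symm ν))
        map_add' := fun u v => by simp only [map_add, Submodule.coe_add, neg_add]
        map_smul' := fun c ν => by
          simp only [map_smulₛₗ, SetLike.val_smul, map_smul, smul_eq_mul, map_mul,
            RingEquiv.apply_symm_apply, RingHom.id_apply, mul_neg, RingHom.coe_coe] }
    obtain ⟨G, hG⟩ := LinearMap.exists_extend g
    set q := (Module.evalEquiv k Q).symm G with hq
    refine ⟨(q, μ), ?_⟩
    have hμval : ∀ r₀ : R₀, μ (Φ (r₀ : Q)) = σ (lam (r₀ : Q)) := by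
      intro r₀
      have hmem : Φ (r₀ : Q) ∈ LinearMap.range (Φ.domRestrict R₀) :=
        ⟨r₀, by simp [LinearMap.domRestrict_apply]⟩
      have h1 : μ (Φ (r₀ : Q)) = f ⟨Φ (r₀ : Q), hmem⟩ := by
        rw [← hμ]; rfl
      have h2 : e.symm ⟨Φ (r₀ : Q), hmem⟩ = r₀ := by
        apply hinj0
        exact LinearEquiv.ofInjective_symm_apply (f := Φ.domRestrict R₀) (h := hinj0)
          ⟨Φ (r₀ : Q), hmem⟩
      rw [h1]
      show σ (lam (e.symm ⟨Φ (r₀ : Q), hmem⟩)) = σ (lam (r₀ : Q))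
      rw [h2]
    have hqval : ∀ r₁ : LinearMap.ker Φ, (Ψ r₁) q = -σ (lam (r₁ : Q)) := by
      intro r₁
      have hmem : Ψ r₁ ∈ LinearMap.range Ψ := ⟨r₁, rfl⟩
      have h0 : (Ψ r₁) q = G (Ψ r₁) := by
        rw [hq]; exact Module.apply_evalEquiv_symm_apply k Q (Ψ r₁) G
      have h1 : G (Ψ r₁) = g ⟨Ψ r₁, hmem⟩ := by rw [← hG]; rfl
      have h2 : eΨ.symm ⟨Ψ r₁, hmem⟩ = r₁ := by
        apply hΨinj
        exact LinearEquiv.ofInjective_symm_apply (f := Ψ) (h := hΨinj) ⟨Ψ r₁, hmem⟩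
      rw [h0, h1]
      show -σ (lam (eΨ.symm ⟨Ψ r₁, hmem⟩)) = -σ (lam (r₁ : Q))
      rw [h2]
    apply Prod.ext
    · rw [hV1]
    · show (V (q, μ)).2 = lam
      apply hfun_ext
      · intro r₀
        rw [hV2]
        show σ.symm (μ (Φ (r₀ : Q))) = lam (r₀ : Q)
        rw [hμval, σ.symm_apply_apply]
      · intro r₁
        rw [hV3]
        show σ.symm (-(Ψ r₁) q) = lam (r₁ : Q)
        rw [hqval, neg_neg, σ.symm_apply_apply]
  refine ⟨?_, ?_, ?_, ?_, ?_⟩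
  · -- range F = ker V
    apply le_antisymm
    · rintro _ ⟨x, rfl⟩
      rcases hdec x.1 with ⟨r₀, r₁, hx⟩
      rw [LinearMap.mem_ker, hFx x r₀ r₁ hx]
      apply Prod.ext
      · rw [hV1]; rfl
      · show (V (Φ (r₀ : Q), Ψ r₁)).2 = (0 : Q × Module.Dual k Q).2
        apply hfun_ext
        · intro r₀'
          rw [hV2]
          show σ.symm ((Ψ r₁) (Φ (r₀' : Q))) = (0 : Module.Dual k Q) (r₀' : Q)
          rw [hann r₁ _ ⟨r₀', rfl⟩]
          simp
        · intro r₁'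
          rw [hV3]
          show σ.symm (-(Ψ r₁') (Φ (r₀ : Q))) = (0 : Module.Dual k Q) (r₁' : Q)
          rw [hann r₁' _ ⟨r₀, rfl⟩]
          simp
    · intro y hy
      rw [LinearMap.mem_ker] at hy
      have hy2 : y.2 ∈ (LinearMap.range Φ).dualAnnihilator := by
        rw [Submodule.mem_dualAnnihilator]
        rintro _ ⟨x, rfl⟩
        rcases hdec x with ⟨r₀, r₁, rfl⟩
        have hΦ : Φ ((r₀ : Q) + (r₁ : Q)) = Φ (r₀ : Q) := by
          rw [map_add, r₁.2, add_zero]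
        rw [hΦ]
        apply hsymm0
        rw [← hV2 y r₀, hy]
        rfl
      have hy1 : y.1 ∈ LinearMap.range Φ := by
        rw [← Subspace.dualAnnihilator_dualCoannihilator_eq (W := LinearMap.range Φ),
          Submodule.mem_dualCoannihilator]
        intro ν hν
        rw [← hΨrange] at hν
        rcases hν with ⟨r₁, rfl⟩
        have h0 : σ.symm (-(Ψ r₁) y.1) = 0 := by rw [← hV3 y r₁, hy]; rfl
        have := hsymm0 _ h0
        simpa [neg_eq_zero] using this
      rcases hy1 with ⟨x, hx⟩
      rcases hdec x with ⟨r₀, r₁', rfl⟩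
      have hΦ : Φ ((r₀ : Q) + (r₁' : Q)) = Φ (r₀ : Q) := by
        rw [map_add, r₁'.2, add_zero]
      rw [hΦ] at hx
      have hy2' : y.2 ∈ LinearMap.range Ψ := by rw [hΨrange]; exact hy2
      rcases hy2' with ⟨r₁, hr₁⟩
      exact ⟨((r₀ : Q) + (r₁ : Q), 0), by rw [hF]; exact Prod.ext hx hr₁⟩
  · -- ker F = range V
    apply le_antisymm
    · intro x hx
      rw [LinearMap.mem_ker] at hx
      rcases hdec x.1 with ⟨r₀, r₁, hx1⟩
      rw [hFx x r₀ r₁ hx1] at hx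
      have h1 : Φ (r₀ : Q) = 0 := congrArg Prod.fst hx
      have h2 : Ψ r₁ = 0 := congrArg Prod.snd hx
      have hr₀ : (r₀ : Q) = 0 := by
        have h4 : (r₀ : Q) ∈ R₀ ⊓ LinearMap.ker Φ := ⟨r₀.2, h1⟩
        rw [hR₀.inf_eq_bot] at h4
        simpa using h4
      have hr₁ : r₁ = 0 := hΨinj (by rw [h2, map_zero])
      have hx0 : x = ((0 : Q), x.2) := by
        refine Prod.ext ?_ rfl
        show x.1 = 0
        rw [hx1, hr₀, hr₁]; simp
      rw [hx0]
      exact hsurj x.2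
    · rintro _ ⟨y, rfl⟩
      rw [LinearMap.mem_ker]
      have h0 : V y = (((0 : R₀) : Q) + ((0 : LinearMap.ker Φ) : Q), (V y).2) := by
        apply Prod.ext
        · rw [hV1]; simp
        · rfl
      rw [h0, hF]
      simp
  · intro x
    rw [hb]; ring
  · intro x hx
    have h1 : x.1 = 0 := by
      rw [← Module.forall_dual_apply_eq_zero_iff k x.1]
      intro φ
      have := hx (0, φ)
      rw [hb] at this
      simpa using this
    have h2 : x.2 = 0 := by
      ext v
      have := hx (v, 0)
      rw [hb] at this
      simpa using this
    exact Prod.ext h1 h2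
  · intro x y
    rcases hdec x.1 with ⟨r₀, r₁, hx1⟩
    rw [hFx x r₀ r₁ hx1, hb, hb]
    have e1 : (V y).2 x.1 = σ.symm (y.2 (Φ (r₀ : Q))) + σ.symm (-(Ψ r₁) y.1) := by
      rw [hx1, map_add, hV2, hV3]
    rw [e1, hV1, map_zero, sub_zero, ← map_add, hpow]
    ring
end

section
/- Let k be a perfect field of characteristic p, (Q,Φ,Ψ) a Hasse–Witt triple, and R_1 = Ker(Φ). If R_0 and R_0' are two complements of R_1 in Q, then the polarized Dieudonné modules (M,F,V,b) and (M,F',V',b) on M = Q ⊕ Q^∨ constructed from (Q,Φ,Ψ) using R_0 and R_0' respectively are isomorphic: there exists a k-linear bijection α : M → M preserving b with α ∘ F = F' ∘ α. -/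
/-- Independence of the choice of complement: if `R₀` and `R₀'` are two complements of
`R₁ = ker Φ` in `Q`, then the polarized Dieudonné modules `(M,F,V,b)` and `(M,F',V',b)`
on `M = Q ⊕ Q^∨` constructed from the Hasse–Witt triple `(Q,Φ,Ψ)` using `R₀`
resp. `R₀'` are isomorphic: there is a `k`-linear bijection `α : M → M` preserving `b`
with `α ∘ F = F' ∘ α`. -/
theorem stmt9 (p : ℕ) [Fact p.Prime] (k : Type*) [Field k] [CharP k p]
    (σ : k ≃+* k) (hσ : ∀ x : k, σ x = x ^ p)
    (Q : Type*) [AddCommGroup Q] [Module k Q] [FiniteDimensional k Q]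
    (Φ : Q →ₛₗ[(σ : k →+* k)] Q)
    (Ψ : ↥(LinearMap.ker Φ) →ₛₗ[(σ : k →+* k)] Module.Dual k Q)
    (hΨinj : Function.Injective Ψ)
    (hΨrange : LinearMap.range Ψ = (LinearMap.range Φ).dualAnnihilator)
    (R₀ R₀' : Submodule k Q)
    (hR₀ : IsCompl R₀ (LinearMap.ker Φ)) (hR₀' : IsCompl R₀' (LinearMap.ker Φ))
    (b : (Q × Module.Dual k Q) →ₗ[k] (Q × Module.Dual k Q) →ₗ[k] k)
    (hb : ∀ x y : Q × Module.Dual k Q, b x y = y.2 x.1 - x.2 y.1)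
    (F F' : (Q × Module.Dual k Q) →ₛₗ[(σ : k →+* k)] (Q × Module.Dual k Q))
    (hF : ∀ (r₀ : ↥R₀) (r₁ : ↥(LinearMap.ker Φ)) (lam : Module.Dual k Q),
      F ((r₀ : Q) + (r₁ : Q), lam) = (Φ (r₀ : Q), Ψ r₁))
    (hF' : ∀ (r₀ : ↥R₀') (r₁ : ↥(LinearMap.ker Φ)) (lam : Module.Dual k Q),
      F' ((r₀ : Q) + (r₁ : Q), lam) = (Φ (r₀ : Q), Ψ r₁)) :
    ∃ α : (Q × Module.Dual k Q) ≃ₗ[k] (Q × Module.Dual k Q),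
      (∀ x y, b (α x) (α y) = b x y) ∧ (∀ x, α (F x) = F' (α x)) := by
  classical
  -- projections onto the kernel along the two complements
  let π₁ : Q →ₗ[k] ↥(LinearMap.ker Φ) :=
    (LinearMap.ker Φ).linearProjOfIsCompl R₀ hR₀.symm
  let π₀ : Q →ₗ[k] ↥R₀ := R₀.linearProjOfIsCompl (LinearMap.ker Φ) hR₀
  let π₁' : Q →ₗ[k] ↥(LinearMap.ker Φ) :=
    (LinearMap.ker Φ).linearProjOfIsCompl R₀' hR₀'.symm
  let π₀' : Q →ₗ[k] ↥R₀' := R₀'.linearProjOfIsCompl (LinearMap.ker Φ) hR₀'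
  have hdecomp : ∀ q : Q, ((π₀ q : Q) + (π₁ q : Q)) = q := fun q =>
    Submodule.projection_add_projection_eq_self hR₀ q
  have hdecomp' : ∀ q : Q, ((π₀' q : Q) + (π₁' q : Q)) = q := fun q =>
    Submodule.projection_add_projection_eq_self hR₀' q
  have hΦπ₀ : ∀ q : Q, Φ ((π₀ q : Q)) = Φ q := by
    intro q
    conv_rhs => rw [← hdecomp q]
    rw [map_add, LinearMap.mem_ker.mp (π₁ q).2, add_zero]
  have hΦπ₀' : ∀ q : Q, Φ ((π₀' q : Q)) = Φ q := by
    intro q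
    conv_rhs => rw [← hdecomp' q]
    rw [map_add, LinearMap.mem_ker.mp (π₁' q).2, add_zero]
  have hFx : ∀ x : Q × Module.Dual k Q, F x = (Φ x.1, Ψ (π₁ x.1)) := by
    intro x
    have h1 := hF (π₀ x.1) (π₁ x.1) x.2
    rw [hdecomp x.1] at h1
    rw [show ((x.1, x.2) : Q × Module.Dual k Q) = x from rfl] at h1
    rw [h1, hΦπ₀]
  have hF'x : ∀ x : Q × Module.Dual k Q, F' x = (Φ x.1, Ψ (π₁' x.1)) := by
    intro x
    have h1 := hF' (π₀' x.1) (π₁' x.1) x.2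
    rw [hdecomp' x.1] at h1
    rw [show ((x.1, x.2) : Q × Module.Dual k Q) = x from rfl] at h1
    rw [h1, hΦπ₀']
  -- the difference map
  let t : Q →ₗ[k] ↥(LinearMap.ker Φ) := π₁' - π₁
  have ht_apply : ∀ q : Q, t q = π₁' q - π₁ q := fun q => rfl
  have ht0 : ∀ x : Q, x ∈ LinearMap.ker Φ → t x = 0 := by
    intro x hx
    have h1 : π₁' x = ⟨x, hx⟩ := Submodule.linearProjOfIsCompl_apply_left hR₀'.symm ⟨x, hx⟩
    have h2 : π₁ x = ⟨x, hx⟩ := Submodule.linearProjOfIsCompl_apply_left hR₀.symm ⟨x, hx⟩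
    rw [ht_apply, h1, h2, sub_self]
  let d : Q → Module.Dual k Q := fun q => Ψ (t q)
  have hd_sub : ∀ x y : Q, d (x - y) = d x - d y := by
    intro x y; show Ψ (t (x - y)) = Ψ (t x) - Ψ (t y); rw [map_sub, map_sub]
  have hd_add : ∀ x y : Q, d (x + y) = d x + d y := by
    intro x y; show Ψ (t (x + y)) = Ψ (t x) + Ψ (t y); rw [map_add, map_add]
  have hd_smul : ∀ (c : k) (x : Q), d (c • x) = ((σ : k →+* k) c) • d x := by
    intro c x; show Ψ (t (c • x)) = _; rw [map_smul, LinearMap.map_smulₛₗ]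
  have hd_ker : ∀ a : Q, Φ a = 0 → d a = 0 := by
    intro a ha
    show Ψ (t a) = 0
    rw [ht0 a (LinearMap.mem_ker.mpr ha), map_zero]
  -- a complement of the range
  obtain ⟨C, hC⟩ := Submodule.exists_isCompl (LinearMap.range Φ)
  let πR : Q →ₗ[k] Q :=
    (LinearMap.range Φ).subtype ∘ₗ (LinearMap.range Φ).linearProjOfIsCompl C hC
  have hπR_mem : ∀ q : Q, πR q ∈ LinearMap.range Φ := fun q =>
    ((LinearMap.range Φ).linearProjOfIsCompl C hC q).2
  have hπR_fix : ∀ q : Q, πR (Φ q) = Φ q := by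
    intro q
    have h1 : (LinearMap.range Φ).linearProjOfIsCompl C hC (Φ q) = ⟨Φ q, ⟨q, rfl⟩⟩ :=
      Submodule.linearProjOfIsCompl_apply_left hC ⟨Φ q, ⟨q, rfl⟩⟩
    show ((LinearMap.range Φ).linearProjOfIsCompl C hC (Φ q) : Q) = Φ q
    rw [h1]
  -- choice of preimages
  have hpre : ∀ q : Q, ∃ a : Q, Φ a = πR q := fun q => hπR_mem q
  let s : Q → Q := fun q => (hpre q).choose
  have hs : ∀ q, Φ (s q) = πR q := fun q => (hpre q).choose_spec
  let f : Q → Module.Dual k Q := fun q => d (s q)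
  have hf_eq : ∀ (q a : Q), Φ a = πR q → f q = d a := by
    intro q a ha
    have h1 : Φ (s q - a) = 0 := by rw [map_sub, hs, ha, sub_self]
    have h2 := hd_ker _ h1
    rw [hd_sub] at h2
    exact sub_eq_zero.mp h2
  have hf_add : ∀ x y : Q, f (x + y) = f x + f y := by
    intro x y
    have h1 : Φ (s x + s y) = πR (x + y) := by rw [map_add, hs, hs, map_add]
    rw [hf_eq (x + y) (s x + s y) h1, hd_add]
  have hf_smul : ∀ (c : k) (x : Q), f (c • x) = c • f x := by
    intro c x
    have h1 : Φ (σ.symm c • s x) = πR (c • x) := by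
      rw [LinearMap.map_smulₛₗ, hs, map_smul]
      congr 1
      exact σ.apply_symm_apply c
    rw [hf_eq (c • x) _ h1, hd_smul]
    congr 1
    exact σ.apply_symm_apply c
  have hf_ann : ∀ x q : Q, f x (Φ q) = 0 := by
    intro x q
    have h1 : f x ∈ LinearMap.range Ψ := ⟨t (s x), rfl⟩
    rw [hΨrange] at h1
    exact ((Submodule.mem_dualAnnihilator (f x)).mp h1) (Φ q) ⟨q, rfl⟩
  have hf_phi : ∀ q : Q, f (Φ q) = d q := fun q => hf_eq (Φ q) q (hπR_fix q).symm
  -- the symmetric bilinear correction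
  let F1 : Q →ₗ[k] Module.Dual k Q :=
    { toFun := f
      map_add' := hf_add
      map_smul' := fun c x => hf_smul c x }
  let B : Q →ₗ[k] Module.Dual k Q := F1 + F1.flip
  have hB_apply : ∀ x y : Q, B x y = f x y + f y x := fun x y => rfl
  have hB_symm : ∀ x y : Q, B x y = B y x := by
    intro x y; rw [hB_apply, hB_apply, add_comm]
  have hB_phi : ∀ q : Q, B (Φ q) = d q := by
    intro q
    apply LinearMap.ext; intro y
    rw [hB_apply, hf_phi, hf_ann, add_zero]
  -- the isomorphism
  let A : (Q × Module.Dual k Q) →ₗ[k] (Q × Module.Dual k Q) :=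
    LinearMap.prod (LinearMap.fst k Q (Module.Dual k Q))
      (LinearMap.snd k Q (Module.Dual k Q) + B ∘ₗ LinearMap.fst k Q (Module.Dual k Q))
  let A' : (Q × Module.Dual k Q) →ₗ[k] (Q × Module.Dual k Q) :=
    LinearMap.prod (LinearMap.fst k Q (Module.Dual k Q))
      (LinearMap.snd k Q (Module.Dual k Q) - B ∘ₗ LinearMap.fst k Q (Module.Dual k Q))
  let α : (Q × Module.Dual k Q) ≃ₗ[k] (Q × Module.Dual k Q) :=
    LinearEquiv.ofLinear A A'
      (LinearMap.ext fun x => Prod.ext rfl (sub_add_cancel x.2 (B x.1)))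
      (LinearMap.ext fun x => Prod.ext rfl (add_sub_cancel_right x.2 (B x.1)))
  have hα : ∀ x : Q × Module.Dual k Q, α x = (x.1, x.2 + B x.1) := fun x => rfl
  refine ⟨α, ?_, ?_⟩
  · intro x y
    rw [hb, hb, hα, hα]
    show y.2 x.1 + B y.1 x.1 - (x.2 y.1 + B x.1 y.1) = y.2 x.1 - x.2 y.1
    rw [hB_symm x.1 y.1]
    ring
  · intro x
    rw [hFx x, hF'x (α x)]
    refine Prod.ext rfl ?_
    show Ψ (π₁ x.1) + B (Φ x.1) = Ψ (π₁' ((α x).1))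
    have h2 : (α x).1 = x.1 := rfl
    rw [h2, hB_phi]
    have h3 : d x.1 = Ψ (π₁' x.1) - Ψ (π₁ x.1) := by
      show Ψ (t x.1) = _
      rw [ht_apply, map_sub]
    rw [h3]
    abel
end

section
/- Let (M,F,V,b) be a polarized Dieudonné module over a perfect field k. Set Q = M/Ker(F), let Φ : Q → Q be induced by F, and for x ∈ M with F(x) ∈ Ker(F) define Ψ(x mod Ker F) = b(−, F(x)) ∈ M^∨. Then b(−,F(x)) vanishes on Ker(F), hence defines an element of Q^∨; moreover Ψ takes values in Im(Φ)^⊥ and Ψ : Ker(Φ) → Im(Φ)^⊥ is a σ-semilinear bijection. Thus (Q,Φ,Ψ) is a Hasse–Witt triple. -/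
/-- From a polarized Dieudonné module `(M,F,V,b)` one obtains a Hasse–Witt triple on
`Q = M/ker F`: for `x` with `F x ∈ ker F` (i.e. `x mod ker F ∈ ker Φ`), the functional
`b(−,F x)` vanishes on `ker F` (hence lives on `Q`), vanishes on the image of `Φ`
(i.e. on all `F y`), the assignment `Ψ(x mod ker F) = b(−,F x)` is injective, and every
functional vanishing on `ker F` and on `im F` arises this way (surjectivity onto
`im(Φ)^⊥`). Thus `(Q,Φ,Ψ)` is a Hasse–Witt triple. -/
theorem stmt10 (p : ℕ) [Fact p.Prime] (k : Type*) [Field k] [CharP k p]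
    (σ : k ≃+* k) (hσ : ∀ x : k, σ x = x ^ p)
    (M : Type*) [AddCommGroup M] [Module k M] [FiniteDimensional k M]
    (F : M →ₛₗ[(σ : k →+* k)] M) (V : M →ₛₗ[(σ.symm : k →+* k)] M)
    (h1 : LinearMap.ker F = LinearMap.range V)
    (h2 : LinearMap.ker V = LinearMap.range F)
    (b : M →ₗ[k] M →ₗ[k] k)
    (halt : ∀ x, b x x = 0)
    (hnd : ∀ x, (∀ y, b x y = 0) → x = 0)
    (hpol : ∀ x y, b (F x) y = (b x (V y)) ^ p) :
    (∀ x, F x ∈ LinearMap.ker F → ∀ y ∈ LinearMap.ker F, b y (F x) = 0) ∧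
    (∀ x, F x ∈ LinearMap.ker F → ∀ y, b (F y) (F x) = 0) ∧
    (∀ x, F x ∈ LinearMap.ker F → (∀ y, b y (F x) = 0) → x ∈ LinearMap.ker F) ∧
    (∀ lam : Module.Dual k M, (∀ y ∈ LinearMap.ker F, lam y = 0) →
      (∀ y, lam (F y) = 0) →
      ∃ x, F x ∈ LinearMap.ker F ∧ ∀ y, lam y = b y (F x)) := by
  have hp0 : ∀ a : k, a ^ p = 0 → a = 0 := by
    intro a ha
    exact (pow_eq_zero_iff (Nat.Prime.ne_zero Fact.out)).mp ha
  have hskew : ∀ x y : M, b x y = - b y x := by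
    intro x y
    have h := halt (x + y)
    simp only [map_add, LinearMap.add_apply, halt x, halt y] at h
    linear_combination h
  refine ⟨?_, ?_, ?_, ?_⟩
  · intro x hx y hy
    rw [h1] at hx
    obtain ⟨u, hu⟩ := hx
    have hy0 : F y = 0 := hy
    have := hpol y u
    rw [hy0, LinearMap.map_zero, LinearMap.zero_apply] at this
    rw [← hu]
    exact (hp0 _ this.symm)
  · intro x hx y
    have hVFx : V (F x) = 0 := by
      have : F x ∈ LinearMap.ker V := by
        rw [h2]; exact ⟨x, rfl⟩
      exact this
    rw [hpol, hVFx, LinearMap.map_zero, zero_pow (Nat.Prime.ne_zero Fact.out)]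
  · intro x hx h
    have hFx : F x = 0 := by
      apply hnd
      intro y
      rw [hskew, h y, neg_zero]
    exact hFx
  · intro lam h0 hIm
    -- b.flip is injective, hence surjective onto the dual
    have hinj : Function.Injective (b.flip) := by
      rw [← LinearMap.ker_eq_bot, LinearMap.ker_eq_bot']
      intro m hm
      apply hnd
      intro y
      have : b y m = 0 := by
        have := congrArg (fun f => f y) hm
        simpa using this
      rw [hskew, this, neg_zero]
    have hsurj : Function.Surjective (b.flip : M →ₗ[k] Module.Dual k M) := by
      have hdim : Module.finrank k M = Module.finrank k (Module.Dual k M) :=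
        (Subspace.dual_finrank_eq).symm
      exact (LinearMap.injective_iff_surjective_of_finrank_eq_finrank hdim).mp hinj
    obtain ⟨w, hw⟩ := hsurj lam
    have hbw : ∀ y, b y w = lam y := by
      intro y
      have := congrArg (fun f => f y) hw
      simpa using this
    -- w ∈ ker F
    have hwker : F w = 0 := by
      apply hnd
      intro u
      rw [hpol]
      have hVu : V u ∈ LinearMap.ker F := by rw [h1]; exact ⟨u, rfl⟩
      have : b w (V u) = 0 := by
        rw [hskew, hbw, h0 _ hVu, neg_zero]
      rw [this, zero_pow (Nat.Prime.ne_zero Fact.out)]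
    -- w ∈ range F
    have hVw : V w = 0 := by
      apply hnd
      intro y
      have : b y (V w) = 0 := by
        apply hp0
        rw [← hpol, hbw, hIm]
      rw [hskew, this, neg_zero]
    have hwrange : w ∈ LinearMap.range F := by
      rw [← h2]; exact hVw
    obtain ⟨x, hx⟩ := hwrange
    refine ⟨x, ?_, ?_⟩
    · show F (F x) = 0
      rw [hx]; exact hwker
    · intro y
      rw [hx, hbw]
end

section
/- Let k be a perfect field of characteristic p, Q a finite-dimensional k-vector space, Φ : Q → Q a σ-semilinear map, R_1 = Ker(Φ), R_0 a complement of R_1, t : R_0 → R_1 a k-linear map, and Ψ : R_1 → Im(Φ)^⊥ ⊆ Q^∨ a σ-semilinear bijection. Then there exists a k-linear map u : Q → Q^∨ which is self-dual (i.e., u(x)(y) = u(y)(x) for all x,y ∈ Q) and satisfies u(Φ(r_0)) = −Ψ(t(r_0)) for all r_0 ∈ R_0. -/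
attribute [local instance] RingHomInvPair.of_ringEquiv

/-- Existence of the self-dual map `u` in the proof of independence of the complement:
given a complement `R₀` of `R₁ = ker Φ`, a linear map `t : R₀ → R₁`, and the
`σ`-semilinear bijection `Ψ : R₁ → im(Φ)^⊥`, there is a self-dual `u : Q → Q^∨`
with `u(Φ(r₀)) = −Ψ(t(r₀))` for all `r₀ ∈ R₀`. -/
theorem stmt15 (p : ℕ) [Fact p.Prime] (k : Type*) [Field k] [CharP k p]
    (σ : k ≃+* k) (hσ : ∀ x : k, σ x = x ^ p)
    (Q : Type*) [AddCommGroup Q] [Module k Q] [FiniteDimensional k Q]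
    (Φ : Q →ₛₗ[(σ : k →+* k)] Q)
    (R₀ : Submodule k Q) (hR₀ : IsCompl R₀ (LinearMap.ker Φ))
    (t : ↥R₀ →ₗ[k] ↥(LinearMap.ker Φ))
    (Ψ : ↥(LinearMap.ker Φ) →ₛₗ[(σ : k →+* k)] Module.Dual k Q)
    (hΨinj : Function.Injective Ψ)
    (hΨrange : LinearMap.range Ψ = (LinearMap.range Φ).dualAnnihilator) :
    ∃ u : Q →ₗ[k] Module.Dual k Q,
      (∀ x y, u x y = u y x) ∧ ∀ r₀ : ↥R₀, u (Φ (r₀ : Q)) = -(Ψ (t r₀)) := by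
  classical
  set Φ' : ↥R₀ →ₛₗ[(σ : k →+* k)] Q := Φ.comp R₀.subtype with hΦ'def
  have hinj : Function.Injective Φ' := by
    rw [← LinearMap.ker_eq_bot]
    rw [Submodule.eq_bot_iff]
    rintro ⟨x, hx⟩ hker
    have hxk : x ∈ LinearMap.ker Φ := hker
    have h0 := hR₀.disjoint.le_bot ⟨hx, hxk⟩
    have hx0 : x = 0 := by simpa using h0
    exact Subtype.ext hx0
  have hrange : LinearMap.range Φ' = LinearMap.range Φ := by
    apply le_antisymm
    · rintro _ ⟨x, rfl⟩; exact ⟨x, rfl⟩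
    · rintro _ ⟨x, rfl⟩
      have hx : x ∈ R₀ ⊔ LinearMap.ker Φ := by rw [hR₀.sup_eq_top]; trivial
      obtain ⟨y, hy, z, hz, rfl⟩ := Submodule.mem_sup.mp hx
      refine ⟨⟨y, hy⟩, ?_⟩
      simp [hΦ'def, map_add, LinearMap.mem_ker.mp hz]
  let e := LinearEquiv.ofInjective Φ' hinj
  let n : ↥R₀ →ₛₗ[(σ : k →+* k)] Module.Dual k Q := -(Ψ.comp t)
  let u₀ : ↥(LinearMap.range Φ') →ₗ[k] Module.Dual k Q := n.comp e.symm.toLinearMap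
  obtain ⟨C, hC⟩ := Submodule.exists_isCompl (LinearMap.range Φ')
  let π := (LinearMap.range Φ').linearProjOfIsCompl C hC
  let A : Q →ₗ[k] Module.Dual k Q := u₀.comp π
  have hann : ∀ w : ↥(LinearMap.range Φ'), u₀ w ∈ (LinearMap.range Φ).dualAnnihilator := by
    intro w
    rw [← hΨrange]
    exact neg_mem ⟨t (e.symm.toLinearMap w), rfl⟩
  refine ⟨A + A.flip, ?_, ?_⟩
  · intro x y
    simp [LinearMap.add_apply, LinearMap.flip_apply]
    ring
  · intro r₀
    ext y
    have hmem : Φ (r₀ : Q) ∈ LinearMap.range Φ' := ⟨r₀, rfl⟩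
    have hπ : π (Φ (r₀ : Q)) = ⟨Φ (r₀ : Q), hmem⟩ :=
      Submodule.linearProjOfIsCompl_apply_left hC ⟨Φ (r₀ : Q), hmem⟩
    have he : e.toLinearMap r₀ = ⟨Φ (r₀ : Q), hmem⟩ := rfl
    have h1 : A (Φ (r₀ : Q)) = -(Ψ (t r₀)) := by
      show u₀ (π (Φ (r₀ : Q))) = _
      rw [hπ, ← he]
      show n (e.symm.toLinearMap (e.toLinearMap r₀)) = _
      rw [show e.symm.toLinearMap (e.toLinearMap r₀) = r₀ from e.symm_apply_apply r₀]
      rfl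
    have h2 : (A.flip (Φ (r₀ : Q))) y = 0 := by
      show (A y) (Φ (r₀ : Q)) = 0
      exact (Submodule.mem_dualAnnihilator _).mp (hann (π y)) _ ⟨(r₀ : Q), rfl⟩
    simp [LinearMap.add_apply, h1, h2]
end
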